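/- Let (M,g) be a product spacetime ℝ × S with metric −dt² ⊕ h, where (S,h) is a compact complete Riemannian manifold of dimension ≥ 1. Then no future-inextendible null geodesic in M is achronal; i.e., M contains no null geodesic rays (every inextendible null geodesic contains two chronologically related points). -/
import Mathlib

/-- In a product spacetime `ℝ × S` with metric `−dt² ⊕ h`, where `(S,h)` is a compact
complete Riemannian manifold (of dimension ≥ 1, modeled here via its metric-space
structure with chronology `(t₀,x₀) ≪ (t₁,x₁) ↔ d(x₀,x₁) < t₁ − t₀`), no inextendible
null geodesic is achronal: every null geodesic `γ(s) = (s, c(s))` (whose projection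
`c` is a unit-speed geodesic of `S`, hence 1-Lipschitz) contains two chronologically
related points. -/
theorem stmt_18 {S : Type*} [MetricSpace S] [CompactSpace S] [Nontrivial S]
    (lt : (ℝ × S) → (ℝ × S) → Prop)
    (hlt : ∀ a b : ℝ × S, lt a b ↔ dist a.2 b.2 < b.1 - a.1)
    (c : ℝ → S) (hc : ∀ s t : ℝ, dist (c s) (c t) ≤ |s - t|)
    (γ : ℝ → ℝ × S) (hγ : ∀ s, γ s = (s, c s)) :
    ∃ s t : ℝ, s < t ∧ lt (γ s) (γ t) := by
  set D := Metric.diam (Set.univ : Set S) with hD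
  refine ⟨0, D + 1, by positivity, ?_⟩
  rw [hγ, hγ, hlt]
  simp only
  have hb : Bornology.IsBounded (Set.univ : Set S) := isCompact_univ.isBounded
  have := Metric.dist_le_diam_of_mem hb (Set.mem_univ (c 0)) (Set.mem_univ (c (D + 1)))
  linarith [Metric.diam_nonneg (s := (Set.univ : Set S))]
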